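/- arXiv:2403.19687 — 3 statements merged into one kernel-verified Lean document; each statement's English description precedes it below -/
import Mathlib

section
/- Let α, β be nonzero complex numbers, let p > 0 be a real number, let λ, μ be real numbers, and let U₁, U₂, U₃, U₄ be complex numbers satisfying the Andrianov relations (R1)–(R4). Then U₁⁴ = U₃U₁ + 2U₂² − 3(λ/√p)·U₂U₁ + (3 + (λ² − μ)/p)·U₁² − 2U₄ + 3(λ/√p)·U₃ − ((λ² + 2μ)/p)·U₂ + (2λ/√p + λμ/p^{3/2})·U₁ − (2 + λ²/p). -/
set_option maxHeartbeats 1000000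

/-- Equation (2.31): under the Andrianov relations (R1)–(R4),
`U₁⁴ = U₃U₁ + 2U₂² − 3(λ/√p)U₂U₁ + (3 + (λ² − μ)/p)U₁² − 2U₄ + 3(λ/√p)U₃
  − ((λ² + 2μ)/p)U₂ + (2λ/√p + λμ/p^{3/2})U₁ − (2 + λ²/p)`. -/
theorem andrianov_U1_fourth
    (α β : ℂ) (hα : α ≠ 0) (hβ : β ≠ 0)
    (p lam mu : ℝ) (hp : 0 < p)
    (U₁ U₂ U₃ U₄ : ℂ)
    (c₁ τ₂ : ℂ)
    (hc₁ : c₁ = α + α⁻¹ + β + β⁻¹)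
    (hτ₂ : τ₂ = 1 + α * β + α * β⁻¹ + α⁻¹ * β + α⁻¹ * β⁻¹)
    (hR1 : -((lam : ℂ) / (Real.sqrt p : ℂ)) = U₁ - c₁)
    (hR2 : (mu : ℂ) / (p : ℂ) = U₂ - U₁ * c₁ + τ₂ + 1)
    (hR3 : (0 : ℂ) = U₃ - U₂ * c₁ + U₁ * (τ₂ + 1) - c₁)
    (hR4 : (0 : ℂ) = U₄ - U₃ * c₁ + U₂ * (τ₂ + 1) - U₁ * c₁ + 1) :
    U₁ ^ 4 = U₃ * U₁ + 2 * U₂ ^ 2 - 3 * ((lam : ℂ) / (Real.sqrt p : ℂ)) * U₂ * U₁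
      + (3 + ((lam : ℂ) ^ 2 - (mu : ℂ)) / (p : ℂ)) * U₁ ^ 2
      - 2 * U₄ + 3 * ((lam : ℂ) / (Real.sqrt p : ℂ)) * U₃
      - (((lam : ℂ) ^ 2 + 2 * (mu : ℂ)) / (p : ℂ)) * U₂
      + (2 * (lam : ℂ) / (Real.sqrt p : ℂ)
          + (lam : ℂ) * (mu : ℂ) / (Real.sqrt p : ℂ) ^ 3) * U₁
      - (2 + (lam : ℂ) ^ 2 / (p : ℂ)) := by
  set q : ℂ := (Real.sqrt p : ℂ) with hq
  have hq2 : q ^ 2 = (p : ℂ) := by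
    rw [hq]; norm_cast; rw [sq]; exact_mod_cast Real.mul_self_sqrt hp.le
  have hqne : q ≠ 0 := by
    rw [hq]; exact_mod_cast Complex.ofReal_ne_zero.mpr (Real.sqrt_ne_zero'.mpr hp)
  clear_value q
  obtain ⟨L, hL⟩ : ∃ L, (lam : ℂ) / q = L := ⟨_, rfl⟩
  obtain ⟨M, hM⟩ : ∃ M, (mu : ℂ) / (p : ℂ) = M := ⟨_, rfl⟩
  have e1 : ((lam : ℂ) ^ 2 - (mu : ℂ)) / (p : ℂ) = L ^ 2 - M := by
    rw [← hL, ← hM, ← hq2]; field_simp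
  have e2 : ((lam : ℂ) ^ 2 + 2 * (mu : ℂ)) / (p : ℂ) = L ^ 2 + 2 * M := by
    rw [← hL, ← hM, ← hq2]; field_simp
  have e3 : 2 * (lam : ℂ) / q + (lam : ℂ) * (mu : ℂ) / q ^ 3 = 2 * L + L * M := by
    rw [← hL, ← hM, ← hq2]; field_simp
  have e4 : (lam : ℂ) ^ 2 / (p : ℂ) = L ^ 2 := by
    rw [← hL, ← hq2]; field_simp
  rw [hL] at hR1
  rw [hM] at hR2
  have hc : c₁ = U₁ + L := by linear_combination hR1
  have ht : τ₂ = M - U₂ + U₁ * c₁ - 1 := by linear_combination -hR2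
  have h3 : U₃ = U₂ * c₁ - U₁ * (τ₂ + 1) + c₁ := by linear_combination -hR3
  have h4 : U₄ = U₃ * c₁ - U₂ * (τ₂ + 1) + U₁ * c₁ - 1 := by linear_combination -hR4
  rw [e1, e2, e3, e4, hL, h4, h3, ht, hc]
  ring
end

section
/- Let α, β be nonzero complex numbers, let p > 0 be a real number, let λ, μ be real numbers, and let U₁, U₂, U₃, U₄ be complex numbers satisfying the Andrianov relations (R1) and (R2). Then τ₄ = U₁⁴ − 2U₂U₁² + 2(λ/√p)·U₁³ + U₂² − 2(λ/√p)·U₂U₁ + ((λ² + 2μ)/p − 2)·U₁² − 2(μ/p)·U₂ + (2λμ/p^{3/2} − 4λ/√p)·U₁ + μ²/p² − 2λ²/p + 1. -/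
/-- Equation (2.28): under the Andrianov relations (R1) and (R2),
`τ₄` is expressed as a polynomial in `U₁, U₂` (of degree up to 4). -/
theorem andrianov_pre_tau4
    (α β : ℂ) (hα : α ≠ 0) (hβ : β ≠ 0)
    (p lam mu : ℝ) (hp : 0 < p)
    (U₁ U₂ U₃ U₄ : ℂ)
    (c₁ τ₂ τ₄ : ℂ)
    (hc₁ : c₁ = α + α⁻¹ + β + β⁻¹)
    (hτ₂ : τ₂ = 1 + α * β + α * β⁻¹ + α⁻¹ * β + α⁻¹ * β⁻¹)
    (hτ₄ : τ₄ = 1 + α ^ 2 * β ^ 2 + α ^ 2 * β⁻¹ ^ 2 + α⁻¹ ^ 2 * β ^ 2 + α⁻¹ ^ 2 * β⁻¹ ^ 2)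
    (hR1 : -((lam : ℂ) / (Real.sqrt p : ℂ)) = U₁ - c₁)
    (hR2 : (mu : ℂ) / (p : ℂ) = U₂ - U₁ * c₁ + τ₂ + 1) :
    τ₄ = U₁ ^ 4 - 2 * U₂ * U₁ ^ 2 + 2 * ((lam : ℂ) / (Real.sqrt p : ℂ)) * U₁ ^ 3
      + U₂ ^ 2 - 2 * ((lam : ℂ) / (Real.sqrt p : ℂ)) * U₂ * U₁
      + (((lam : ℂ) ^ 2 + 2 * (mu : ℂ)) / (p : ℂ) - 2) * U₁ ^ 2
      - 2 * ((mu : ℂ) / (p : ℂ)) * U₂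
      + (2 * (lam : ℂ) * (mu : ℂ) / (Real.sqrt p : ℂ) ^ 3
          - 4 * (lam : ℂ) / (Real.sqrt p : ℂ)) * U₁
      + (mu : ℂ) ^ 2 / (p : ℂ) ^ 2 - 2 * (lam : ℂ) ^ 2 / (p : ℂ) + 1 := by
  have hq0 : Real.sqrt p ≠ 0 := ne_of_gt (Real.sqrt_pos.mpr hp)
  have hq : (Real.sqrt p : ℂ) ≠ 0 := by exact_mod_cast hq0
  have hqp : ((Real.sqrt p : ℂ)) ^ 2 = (p : ℂ) := by
    norm_cast
    exact Real.sq_sqrt hp.le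
  have hp0 : (p : ℂ) ≠ 0 := by exact_mod_cast hp.ne'
  have ha : α * α⁻¹ = 1 := mul_inv_cancel₀ hα
  have hb : β * β⁻¹ = 1 := mul_inv_cancel₀ hβ
  have hkey : τ₄ = τ₂ ^ 2 + 2 * τ₂ - 2 * c₁ ^ 2 + 2 := by
    subst hc₁ hτ₂ hτ₄
    linear_combination (-2 * (β ^ 2 + β⁻¹ ^ 2) - 4 * (β * β⁻¹ - 1)) * ha
      + (-2 * (α ^ 2 + α⁻¹ ^ 2)) * hb
  have hlam : (lam : ℂ) = (Real.sqrt p : ℂ) * (c₁ - U₁) := by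
    field_simp at hR1
    linear_combination -hR1
  have hmu : (mu : ℂ) = (p : ℂ) * (U₂ - U₁ * c₁ + τ₂ + 1) := by
    field_simp at hR2
    linear_combination hR2
  have hlam2 : (lam : ℂ) ^ 2 = (p : ℂ) * (c₁ - U₁) ^ 2 := by
    rw [hlam, mul_pow, hqp]
  have e1 : (lam : ℂ) / (Real.sqrt p : ℂ) = c₁ - U₁ := by
    rw [hlam, mul_div_cancel_left₀ _ hq]
  have e2 : ((lam : ℂ) ^ 2 + 2 * (mu : ℂ)) / (p : ℂ)
      = (c₁ - U₁) ^ 2 + 2 * (U₂ - U₁ * c₁ + τ₂ + 1) := by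
    rw [hlam2, hmu]
    field_simp
  have e4 : (mu : ℂ) ^ 2 / (p : ℂ) ^ 2 = (U₂ - U₁ * c₁ + τ₂ + 1) ^ 2 := by
    rw [← div_pow, hR2]
  have e5 : 2 * (lam : ℂ) * (mu : ℂ) / (Real.sqrt p : ℂ) ^ 3
      = 2 * (c₁ - U₁) * (U₂ - U₁ * c₁ + τ₂ + 1) := by
    rw [hlam, hmu, ← hqp]
    field_simp
  have e7 : 4 * (lam : ℂ) / (Real.sqrt p : ℂ) = 4 * (c₁ - U₁) := by
    rw [hlam]
    field_simp
  have e8 : 2 * (lam : ℂ) ^ 2 / (p : ℂ) = 2 * (c₁ - U₁) ^ 2 := by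
    rw [hlam2]
    field_simp
  rw [hkey, e1, e2, hR2, e4, e5, e7, e8]
  ring
end

section
/- Let Φ : ℝ → ℝ be an even Schwartz function whose Fourier transform Φ̂ is supported in [−1, 1]. Then ∫_ℝ Φ(x)·(1 − sin(2πx)/(2πx)) dx = Φ̂(0) − Φ(0)/2, where the factor sin(2πx)/(2πx) is interpreted as 1 at x = 0. (In other words, ∫_ℝ Φ(x) W(Sp)(x) dx = Φ̂(0) − Φ(0)/2 for the symplectic density W(Sp)(x) = 1 − sin(2πx)/(2πx).) -/
open MeasureTheory Complex FourierTransform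

/-- For an even Schwartz test function `Φ` whose Fourier transform is supported in
`[−1, 1]`, one has `∫ Φ(x) W(Sp)(x) dx = Φ̂(0) − Φ(0)/2`, where
`W(Sp)(x) = 1 − sin(2πx)/(2πx)` is the symplectic density. -/
theorem symplectic_density_integral (Φ : SchwartzMap ℝ ℝ)
    (heven : ∀ x : ℝ, Φ (-x) = Φ x)
    (hsupp : ∀ y : ℝ, 1 < |y| → FourierTransform.fourier (fun x : ℝ => (Φ x : ℂ)) y = 0) :
    ∫ x : ℝ, (Φ x : ℂ) *
        (1 - if x = 0 then 1 else
          ((Real.sin (2 * Real.pi * x) / (2 * Real.pi * x) : ℝ) : ℂ)) =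
      FourierTransform.fourier (fun x : ℝ => (Φ x : ℂ)) 0 - (Φ 0 : ℂ) / 2 := by
  classical
  set fc : ℝ → ℂ := fun x => (Φ x : ℂ) with hfc_def
  set g : ℝ → ℂ := Set.indicator (Set.Icc (-1 : ℝ) 1) (fun _ => (1 : ℂ)) with hg_def
  set s : ℝ → ℂ := fun x => if x = 0 then 1 else
      ((Real.sin (2 * Real.pi * x) / (2 * Real.pi * x) : ℝ) : ℂ) with hs_def
  have hfc_int : Integrable fc := (Φ.integrable).ofReal
  have hfc_cont : Continuous fc := Complex.continuous_ofReal.comp Φ.continuous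
  have hg_int : Integrable g := by
    rw [hg_def, integrable_indicator_iff measurableSet_Icc]
    exact integrableOn_const (by simp [Real.volume_Icc])
  -- Fourier transform of the boxcar
  have hFg : ∀ x : ℝ, FourierTransform.fourier g x = 2 * s x := by
    intro x
    rw [Real.fourier_real_eq_integral_exp_smul]
    have h1 : ∀ v : ℝ, Complex.exp (↑(-2 * Real.pi * v * x) * Complex.I) • g v
        = Set.indicator (Set.Icc (-1 : ℝ) 1)
            (fun v : ℝ => Complex.exp (↑(-2 * Real.pi * v * x) * Complex.I)) v := by
      intro v
      by_cases hv : v ∈ Set.Icc (-1 : ℝ) 1 <;> simp [hg_def, hv]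
    simp_rw [h1]
    rw [integral_indicator measurableSet_Icc, MeasureTheory.integral_Icc_eq_integral_Ioc,
      ← intervalIntegral.integral_of_le (by norm_num : (-1 : ℝ) ≤ 1)]
    by_cases hx : x = 0
    · simp [hs_def, hx]
      norm_num
    · have hπ : (0 : ℝ) < Real.pi := Real.pi_pos
      have hc : ((-2 * Real.pi * x : ℝ) : ℂ) * Complex.I ≠ 0 := by
        simp [Complex.ext_iff, Real.pi_ne_zero, hx]
      have h2 : ∀ v : ℝ, (↑(-2 * Real.pi * v * x) : ℂ) * Complex.I
          = (((-2 * Real.pi * x : ℝ) : ℂ) * Complex.I) * v := by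
        intro v; push_cast; ring
      simp_rw [h2]
      rw [integral_exp_mul_complex hc]
      have e1 : (((-2 * Real.pi * x : ℝ) : ℂ) * Complex.I) * ((1 : ℝ) : ℂ)
          = (-((2 * Real.pi * x : ℝ) : ℂ)) * Complex.I := by push_cast; ring
      have e2 : (((-2 * Real.pi * x : ℝ) : ℂ) * Complex.I) * ((-1 : ℝ) : ℂ)
          = (((2 * Real.pi * x) : ℝ) : ℂ) * Complex.I := by push_cast; ring
      rw [e1, e2, Complex.exp_mul_I, Complex.exp_mul_I, Complex.cos_neg, Complex.sin_neg]
      simp only [hs_def, hx, if_false]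
      rw [div_eq_iff hc]
      have ha : (2 : ℂ) * (Real.pi : ℂ) * (x : ℂ) ≠ 0 := by
        simp [Real.pi_ne_zero, hx]
      push_cast
      field_simp
      have hx' : (x : ℂ) ≠ 0 := Complex.ofReal_ne_zero.mpr hx
      field_simp
      ring
  -- the integrand is bounded, so s * fc is integrable
  have hFg_cont : Continuous (FourierTransform.fourier g) :=
    VectorFourier.fourierIntegral_continuous (L := innerₗ ℝ) Real.continuous_fourierChar
      (by exact continuous_inner) hg_int
  have hs_int : Integrable (fun x => fc x * s x) := by
    have : Integrable (fun x => s x * fc x) := by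
      apply hfc_int.bdd_mul (c := 2⁻¹ * ∫ v, ‖g v‖)
      · have : Continuous s := by
          have := hFg_cont.const_smul (2⁻¹ : ℂ)
          convert this using 1
          ext x
          rw [Pi.smul_apply, hFg x, smul_eq_mul]
          ring
        exact this.aestronglyMeasurable
      · refine Filter.Eventually.of_forall (fun x => ?_)
        have hx2 : s x = (2⁻¹ : ℂ) * FourierTransform.fourier g x := by
          rw [hFg x]; ring
        rw [hx2, norm_mul]
        have h2 : ‖(2⁻¹ : ℂ)‖ = 2⁻¹ := by simp
        rw [h2]
        gcongr
        exact VectorFourier.norm_fourierIntegral_le_integral_norm _ _ _ _ _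
    simpa [mul_comm] using this
  -- multiplication formula
  have hmul : ∫ x, fc x * FourierTransform.fourier g x
      = ∫ ξ, FourierTransform.fourier fc ξ * g ξ := by
    have := VectorFourier.integral_fourierIntegral_smul_eq_flip (L := innerₗ ℝ)
      Real.continuous_fourierChar continuous_inner hfc_int hg_int
    have hflip : (innerₗ ℝ).flip = innerₗ ℝ := by
      apply LinearMap.ext; intro x; apply LinearMap.ext; intro y
      simp [real_inner_comm]
    rw [hflip] at this
    have h := this.symm
    simp only [smul_eq_mul] at h
    exact h
  -- Fourier inversion at 0
  have hFfc_supp : HasCompactSupport (FourierTransform.fourier fc) := by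
    apply HasCompactSupport.intro (isCompact_Icc (a := (-1 : ℝ)) (b := 1))
    intro x hx
    apply hsupp
    rw [Set.mem_Icc] at hx
    push_neg at hx
    rcases le_or_gt (-1 : ℝ) x with h | h
    · exact lt_of_lt_of_le (hx h) (le_abs_self x)
    · rw [abs_of_neg (by linarith)]; linarith
  have hFfc_cont : Continuous (FourierTransform.fourier fc) :=
    VectorFourier.fourierIntegral_continuous (L := innerₗ ℝ) Real.continuous_fourierChar
      (by exact continuous_inner) hfc_int
  have hFfc_int : Integrable (FourierTransform.fourier fc) :=
    hFfc_cont.integrable_of_hasCompactSupport hFfc_supp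
  have hinv : ∫ ξ, FourierTransform.fourier fc ξ = (Φ 0 : ℂ) := by
    have := hfc_int.fourierInv_fourier_eq hFfc_int (v := 0) hfc_cont.continuousAt
    rw [Real.fourierInv_eq] at this
    simpa using this
  have hsuppg : ∫ ξ, FourierTransform.fourier fc ξ * g ξ = ∫ ξ, FourierTransform.fourier fc ξ := by
    congr 1
    ext ξ
    by_cases hξ : ξ ∈ Set.Icc (-1 : ℝ) 1
    · simp [hg_def, hξ]
    · have : 1 < |ξ| := by
        rw [Set.mem_Icc] at hξ; push_neg at hξ
        rcases le_or_gt (-1 : ℝ) ξ with h | h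
        · exact lt_of_lt_of_le (hξ h) (le_abs_self ξ)
        · rw [abs_of_neg (by linarith)]; linarith
      simp [hg_def, hξ, hsupp ξ this]
  -- put everything together
  have hsFg : ∀ x, fc x * s x = (2⁻¹ : ℂ) * (fc x * FourierTransform.fourier g x) := by
    intro x; rw [hFg x]; ring
  have hsplit : ∫ x, fc x * (1 - s x) = (∫ x, fc x) - ∫ x, fc x * s x := by
    rw [← integral_sub hfc_int hs_int]
    congr 1; ext x; ring
  have hF0 : FourierTransform.fourier fc 0 = ∫ x, fc x := by
    rw [Real.fourier_real_eq]
    simp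
  calc ∫ x, fc x * (1 - s x) = (∫ x, fc x) - ∫ x, fc x * s x := hsplit
    _ = (∫ x, fc x) - (2⁻¹ : ℂ) * ∫ x, fc x * FourierTransform.fourier g x := by
        rw [show (∫ x, fc x * s x) = ∫ x, (2⁻¹ : ℂ) * (fc x * FourierTransform.fourier g x) by
          congr 1; ext x; exact hsFg x, integral_const_mul]
    _ = (∫ x, fc x) - (2⁻¹ : ℂ) * (Φ 0 : ℂ) := by rw [hmul, hsuppg, hinv]
    _ = FourierTransform.fourier fc 0 - (Φ 0 : ℂ) / 2 := by rw [hF0]; ring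
end
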